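/- Let A = U Σ_A X^{-1}, B = V Σ_B X^{-1} be a GSVD of (A,B) with c_j² + s_j² = 1 for each j. If x̃ = ξ x₁ + f where x₁ is the first column of X, f is orthogonal to X^{-*}e₁, and c̃² = ‖Ax̃‖², s̃² = ‖Bx̃‖², then c̃² = ξ² c₁² + ‖Af‖² and s̃² = ξ² s₁² + ‖Bf‖². In particular the errors c̃² − ξ²c₁² and s̃² − ξ²s₁² are quadratic in ‖f‖. -/

import Mathlib

open Matrix

noncomputable section

/-- Euclidean norm of a complex vector. -/
def en {ι : Type*} [Fintype ι] (v : ι → ℂ) : ℝ := Real.sqrt (∑ i, ‖v i‖ ^ 2)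


lemma en_sq {ι : Type*} [Fintype ι] (v : ι → ℂ) :
    en v ^ 2 = (star v ⬝ᵥ v).re := by
  have h1 : en v ^ 2 = ∑ i, ‖v i‖ ^ 2 := by
    rw [en, Real.sq_sqrt]
    positivity
  rw [h1, dotProduct, Complex.re_sum]
  congr 1; ext i
  simp [Pi.star_apply, ← Complex.normSq_eq_norm_sq,
    Complex.normSq_apply, Complex.mul_re]


lemma isometry_dot {m n : ℕ} (U : Matrix (Fin m) (Fin n) ℂ) (hU : Uᴴ * U = 1)
    (w w' : Fin n → ℂ) :
    star (U.mulVec w) ⬝ᵥ (U.mulVec w') = star w ⬝ᵥ w' := by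
  rw [star_mulVec, dotProduct_mulVec, vecMul_vecMul, hU, vecMul_one]


lemma aux {m n : ℕ} [NeZero n]
    (U : Matrix (Fin m) (Fin n) ℂ) (hU : Uᴴ * U = 1)
    (X : Matrix (Fin n) (Fin n) ℂ) (hX : IsUnit X.det) (d : Fin n → ℝ)
    (ξ : ℝ) (x1 f xt : Fin n → ℂ)
    (hx1 : x1 = X.mulVec (Pi.single 0 1))
    (hf : ((X⁻¹).mulVec f) 0 = 0)
    (hxt : xt = ((ξ : ℝ) : ℂ) • x1 + f) :
    en ((U * Matrix.diagonal (fun j => (d j : ℂ)) * X⁻¹).mulVec xt) ^ 2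
      = ξ ^ 2 * d 0 ^ 2 + en ((U * Matrix.diagonal (fun j => (d j : ℂ)) * X⁻¹).mulVec f) ^ 2 := by
  set D := Matrix.diagonal (fun j => (d j : ℂ)) with hD
  have key : ∀ v : Fin n → ℂ,
      en ((U * D * X⁻¹).mulVec v) ^ 2
        = (star (D.mulVec ((X⁻¹).mulVec v)) ⬝ᵥ (D.mulVec ((X⁻¹).mulVec v))).re := by
    intro v
    rw [en_sq]
    have : (U * D * X⁻¹).mulVec v = U.mulVec (D.mulVec ((X⁻¹).mulVec v)) := by
      rw [mulVec_mulVec, mulVec_mulVec, Matrix.mul_assoc]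
    rw [this, isometry_dot U hU]
  -- g := X⁻¹ f
  set g := (X⁻¹).mulVec f with hg
  have hXx1 : (X⁻¹).mulVec x1 = Pi.single 0 1 := by
    rw [hx1, mulVec_mulVec, Matrix.nonsing_inv_mul X hX, one_mulVec]
  have hxt' : (X⁻¹).mulVec xt = ((ξ : ℝ) : ℂ) • (Pi.single 0 1 : Fin n → ℂ) + g := by
    rw [hxt, mulVec_add, mulVec_smul, hXx1]
  have hDe1 : D.mulVec (Pi.single 0 1) = (Pi.single 0 ((d 0 : ℂ)) : Fin n → ℂ) := by
    rw [hD, diagonal_mulVec_single, mul_one]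
  have hDxt : D.mulVec ((X⁻¹).mulVec xt)
      = ((ξ : ℝ) : ℂ) • (Pi.single 0 ((d 0 : ℂ)) : Fin n → ℂ) + D.mulVec g := by
    rw [hxt', mulVec_add, mulVec_smul, hDe1]
  have hDg0 : (D.mulVec g) 0 = 0 := by
    rw [hD]
    simp [mulVec_diagonal, hf]
  rw [key, key, hDxt]
  set w := D.mulVec g with hw
  have expand : star (((ξ : ℝ) : ℂ) • (Pi.single 0 ((d 0 : ℂ)) : Fin n → ℂ) + w)
        ⬝ᵥ (((ξ : ℝ) : ℂ) • (Pi.single 0 ((d 0 : ℂ)) : Fin n → ℂ) + w)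
      = ((ξ : ℝ) : ℂ) ^ 2 * ((d 0 : ℂ)) ^ 2 + star w ⬝ᵥ w := by
    rw [star_add, star_smul, add_dotProduct, dotProduct_add, dotProduct_add]
    have h1 : star (Pi.single 0 ((d 0 : ℂ)) : Fin n → ℂ) = (Pi.single 0 ((d 0 : ℂ)) : Fin n → ℂ) := by
      ext i
      by_cases h : i = 0 <;> simp [h, Pi.single_apply]
    have h2 : (Pi.single 0 ((d 0 : ℂ)) : Fin n → ℂ) ⬝ᵥ w = (d 0 : ℂ) * w 0 := by
      simp [single_dotProduct]
    have h3 : w ⬝ᵥ (Pi.single 0 ((d 0 : ℂ)) : Fin n → ℂ) = w 0 * (d 0 : ℂ) := by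
      simp [dotProduct_single]
    have h4 : (Pi.single 0 ((d 0 : ℂ)) : Fin n → ℂ) ⬝ᵥ (Pi.single 0 ((d 0 : ℂ)) : Fin n → ℂ)
        = ((d 0 : ℂ)) ^ 2 := by
      simp [single_dotProduct, Pi.single_apply, sq]
    have h5 : star w ⬝ᵥ (Pi.single 0 ((d 0 : ℂ)) : Fin n → ℂ) = 0 := by
      simp [dotProduct_single, Pi.star_apply, hDg0]
    rw [smul_dotProduct, smul_dotProduct, dotProduct_smul, dotProduct_smul, h1, h2, h4,
      h5, hDg0]
    simp [Complex.star_def, Complex.conj_ofReal, smul_eq_mul]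
    ring
  rw [expand]
  simp [Complex.add_re, ← Complex.ofReal_pow, ← Complex.ofReal_mul]

theorem stmt18 {m p n : ℕ} [NeZero n]
    (A : Matrix (Fin m) (Fin n) ℂ) (B : Matrix (Fin p) (Fin n) ℂ)
    (U : Matrix (Fin m) (Fin n) ℂ) (V : Matrix (Fin p) (Fin n) ℂ)
    (X : Matrix (Fin n) (Fin n) ℂ) (hX : IsUnit X.det)
    (hU : Uᴴ * U = 1) (hV : Vᴴ * V = 1)
    (c s : Fin n → ℝ) (hcs : ∀ j, c j ^ 2 + s j ^ 2 = 1)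
    (hA : A = U * Matrix.diagonal (fun j => (c j : ℂ)) * X⁻¹)
    (hB : B = V * Matrix.diagonal (fun j => (s j : ℂ)) * X⁻¹)
    (ξ : ℝ) (x1 f xt : Fin n → ℂ)
    (hx1 : x1 = X.mulVec (Pi.single 0 1))
    (hf : star ((X⁻¹)ᴴ.mulVec (Pi.single 0 1)) ⬝ᵥ f = 0)
    (hxt : xt = ((ξ : ℝ) : ℂ) • x1 + f) :
    en (A.mulVec xt) ^ 2 = ξ ^ 2 * c 0 ^ 2 + en (A.mulVec f) ^ 2 ∧
      en (B.mulVec xt) ^ 2 = ξ ^ 2 * s 0 ^ 2 + en (B.mulVec f) ^ 2 := by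
  have hf' : ((X⁻¹).mulVec f) 0 = 0 := by
    have h := hf
    rw [star_mulVec, conjTranspose_conjTranspose, ← dotProduct_mulVec] at h
    have hst : star (Pi.single 0 1 : Fin n → ℂ) = Pi.single 0 1 := by
      ext i; by_cases hi : i = 0 <;> simp [hi, Pi.single_apply]
    rw [hst, single_dotProduct, one_mul] at h
    exact h
  exact ⟨hA ▸ aux U hU X hX c ξ x1 f xt hx1 hf' hxt,
         hB ▸ aux V hV X hX s ξ x1 f xt hx1 hf' hxt⟩
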